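/- The lattice L_1(n,m;q) is isomorphic as a poset to the lattice of F_q-subspaces of F_q^n; the isomorphism sends an F_q-subspace U of F_q^n to its F_{q^m}-span U ⊗_{F_q} F_{q^m} inside (F_{q^m})^n. In particular, L_1(n,m;q) is a modular lattice. -/

import Mathlib

open Submodule

/-- The rank of a vector `v ∈ L^n`: the `Fq`-dimension of the `Fq`-span of its entries. -/
noncomputable def rkVec (Fq : Type*) {L : Type*} [Field Fq] [Field L] [Algebra Fq L]
    {n : ℕ} (v : Fin n → L) : ℕ :=
  Module.finrank Fq ↥(Submodule.span Fq (Set.range v))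

/-- The rank-metric lattice `L_i(n,m;q)`: subspaces of `L^n` spanned by their vectors of
rank at most `i`. -/
def RML (Fq L : Type*) [Field Fq] [Field L] [Algebra Fq L] (n i : ℕ) :
    Set (Submodule L (Fin n → L)) :=
  {X | X = Submodule.span L {x | x ∈ X ∧ rkVec Fq x ≤ i}}

/-- The meet in the rank-metric lattice: span of the rank-`≤ i` vectors of the intersection. -/
def rmlMeet (Fq : Type*) {L : Type*} [Field Fq] [Field L] [Algebra Fq L] {n : ℕ} (i : ℕ)
    (X Y : Submodule L (Fin n → L)) : Submodule L (Fin n → L) :=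
  Submodule.span L {x | x ∈ X ⊓ Y ∧ rkVec Fq x ≤ i}

/-- `X` is a modular element of the rank-metric lattice `L_i`. -/
def IsModularElt (Fq : Type*) {L : Type*} [Field Fq] [Field L] [Algebra Fq L] {n : ℕ} (i : ℕ)
    (X : Submodule L (Fin n → L)) : Prop :=
  ∀ Y ∈ RML Fq L n i,
    Module.finrank L ↥(rmlMeet Fq i X Y) + Module.finrank L ↥(X ⊔ Y)
      = Module.finrank L ↥X + Module.finrank L ↥Y


section Aux

variable (Fq L : Type*) [Field Fq] [Field L] [Algebra Fq L] (n : ℕ)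

/-- The coordinatewise algebra map. -/
noncomputable def eLmap : (Fin n → Fq) →ₗ[Fq] (Fin n → L) :=
  (Algebra.linearMap Fq L).compLeft (Fin n)

variable {Fq L n}

lemma eLmap_apply (u : Fin n → Fq) : eLmap Fq L n u = fun i => algebraMap Fq L (u i) := rfl

/-- There is an `Fq`-linear retraction of `algebraMap Fq L`. -/
lemma exists_retraction : ∃ π : L →ₗ[Fq] Fq, π 1 = 1 := by
  obtain ⟨p, hp⟩ := Submodule.exists_isCompl (Fq ∙ (1 : L))
  set e := LinearEquiv.toSpanNonzeroSingleton Fq L 1 one_ne_zero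
  refine ⟨e.symm.toLinearMap ∘ₗ (Fq ∙ (1 : L)).projectionOnto p hp, ?_⟩
  have h1 : (1 : L) ∈ Fq ∙ (1 : L) := mem_span_singleton_self 1
  have : ((Fq ∙ (1 : L)).projectionOnto p hp) (1 : L)
      = (⟨1, h1⟩ : Fq ∙ (1 : L)) := by
    have := Submodule.linearProjOfIsCompl_apply_left hp (⟨1, h1⟩ : Fq ∙ (1 : L))
    simpa using this
  simp only [LinearMap.comp_apply, this, LinearEquiv.coe_coe]
  rw [LinearEquiv.symm_apply_eq]
  exact (LinearEquiv.toSpanNonzeroSingleton_one Fq L 1 one_ne_zero).symm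

/-- Vectors with entries from `Fq` have rank at most one. -/
lemma rkVec_eLmap_le_one (u : Fin n → Fq) : rkVec Fq (eLmap Fq L n u) ≤ 1 := by
  have hr : Set.range (eLmap Fq L n u) = (Algebra.linearMap Fq L) '' (Set.range u) := by
    rw [eLmap_apply, ← Set.range_comp]; rfl
  rw [rkVec, hr, ← Submodule.map_span]
  calc Module.finrank Fq ((span Fq (Set.range u)).map (Algebra.linearMap Fq L))
      ≤ Module.finrank Fq (span Fq (Set.range u)) := Submodule.finrank_map_le _ _
    _ ≤ Module.finrank Fq Fq := (span Fq (Set.range u)).finrank_le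
    _ = 1 := Module.finrank_self Fq

/-- Key injectivity: membership in the `L`-span of an image reflects to the `Fq`-span. -/
lemma mem_span_of_eLmap_mem_span {s : Set (Fin n → Fq)} {u : Fin n → Fq}
    (h : eLmap Fq L n u ∈ span L (eLmap Fq L n '' s)) : u ∈ span Fq s := by
  obtain ⟨π, hπ⟩ := (exists_retraction : ∃ π : L →ₗ[Fq] Fq, π 1 = 1)
  obtain ⟨k, c, g, hsum⟩ := mem_span_set'.mp h
  choose v hv hgv using fun j => (g j).2
  have key : u = ∑ j, π (c j) • v j := by
    funext i
    have h1 : ∑ j, c j • ((g j : Fin n → L) i) = algebraMap Fq L (u i) := by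
      have := congrFun hsum i
      rw [Finset.sum_apply] at this
      simpa [eLmap_apply] using this
    have h2 : ∀ j, (g j : Fin n → L) i = algebraMap Fq L (v j i) := by
      intro j; rw [← hgv j]; rfl
    have h3 : π (algebraMap Fq L (u i)) = u i := by
      rw [Algebra.algebraMap_eq_smul_one, map_smul, hπ, smul_eq_mul, mul_one]
    calc u i = π (∑ j, c j • ((g j : Fin n → L) i)) := by rw [h1, h3]
      _ = ∑ j, π (c j • algebraMap Fq L (v j i)) := by
          rw [map_sum]; exact Finset.sum_congr rfl fun j _ => by rw [h2]
      _ = ∑ j, v j i • π (c j) := by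
          refine Finset.sum_congr rfl fun j _ => ?_
          rw [smul_eq_mul, mul_comm, ← Algebra.smul_def, map_smul]
      _ = (∑ j, π (c j) • v j) i := by
          rw [Finset.sum_apply]
          exact Finset.sum_congr rfl fun j _ => by rw [Pi.smul_apply, smul_eq_mul, smul_eq_mul,
            mul_comm]
  rw [key]
  exact sum_mem fun j _ => smul_mem _ _ (subset_span (hv j))

/-- Decomposition of rank ≤ 1 vectors. -/
lemma exists_smul_of_rkVec_le_one {x : Fin n → L} (h : rkVec Fq x ≤ 1) :
    ∃ (w : L) (c : Fin n → Fq), x = w • eLmap Fq L n c := by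
  have : FiniteDimensional Fq (span Fq (Set.range x)) :=
    FiniteDimensional.span_of_finite Fq (Set.finite_range x)
  obtain ⟨v₀, hv₀⟩ := finrank_le_one_iff.mp h
  choose cf hcf using fun i => hv₀ ⟨x i, subset_span (Set.mem_range_self i)⟩
  refine ⟨(v₀ : L), cf, ?_⟩
  funext i
  have := congrArg (Subtype.val) (hcf i)
  simp only [SetLike.val_smul] at this
  rw [Pi.smul_apply, eLmap_apply, ← this, Algebra.smul_def, smul_eq_mul, mul_comm]

variable (Fq L n)

/-- The forward map. -/
noncomputable def fH (U : Submodule Fq (Fin n → Fq)) : Submodule L (Fin n → L) :=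
  span L (eLmap Fq L n '' (U : Set (Fin n → Fq)))

/-- The backward map. -/
noncomputable def gH (X : Submodule L (Fin n → L)) : Submodule Fq (Fin n → Fq) :=
  (X.restrictScalars Fq).comap (eLmap Fq L n)

variable {Fq L n}

lemma gH_fH (U : Submodule Fq (Fin n → Fq)) : gH Fq L n (fH Fq L n U) = U := by
  apply le_antisymm
  · intro u hu
    have := mem_span_of_eLmap_mem_span (s := (U : Set (Fin n → Fq))) hu
    rwa [Submodule.span_eq] at this
  · intro u hu
    exact subset_span (Set.mem_image_of_mem _ hu)

lemma fH_mono {U V : Submodule Fq (Fin n → Fq)} (h : U ≤ V) : fH Fq L n U ≤ fH Fq L n V :=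
  span_mono (Set.image_mono h)

lemma gH_mono {X Y : Submodule L (Fin n → L)} (h : X ≤ Y) : gH Fq L n X ≤ gH Fq L n Y :=
  Submodule.comap_mono fun _ hx => h hx

lemma fH_le_iff {U V : Submodule Fq (Fin n → Fq)} : fH Fq L n U ≤ fH Fq L n V ↔ U ≤ V := by
  constructor
  · intro h
    have := gH_mono (Fq := Fq) h
    rwa [gH_fH, gH_fH] at this
  · exact fH_mono

lemma fH_mem_RML (U : Submodule Fq (Fin n → Fq)) : fH Fq L n U ∈ RML Fq L n 1 := by
  apply le_antisymm
  · apply span_mono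
    rintro x ⟨u, hu, rfl⟩
    exact ⟨subset_span (Set.mem_image_of_mem _ hu), rkVec_eLmap_le_one u⟩
  · exact span_le.mpr fun x hx => hx.1

/-- rank-≤1 elements of a submodule lie in `fH (gH X)`. -/
lemma mem_fH_gH {X : Submodule L (Fin n → L)} {x : Fin n → L}
    (hx : x ∈ X) (hr : rkVec Fq x ≤ 1) : x ∈ fH Fq L n (gH Fq L n X) := by
  obtain ⟨w, c, rfl⟩ := exists_smul_of_rkVec_le_one hr
  rcases eq_or_ne w 0 with rfl | hw
  · simp
  · have hc : eLmap Fq L n c ∈ X := by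
      have : eLmap Fq L n c = w⁻¹ • (w • eLmap Fq L n c) := by
        rw [smul_smul, inv_mul_cancel₀ hw, one_smul]
      rw [this]; exact X.smul_mem _ hx
    exact Submodule.smul_mem _ _ (subset_span (Set.mem_image_of_mem _ hc))

lemma fH_gH (X : Submodule L (Fin n → L)) (hX : X ∈ RML Fq L n 1) :
    fH Fq L n (gH Fq L n X) = X := by
  apply le_antisymm
  · exact span_le.mpr (by rintro x ⟨u, hu, rfl⟩; exact hu)
  · conv_lhs => rw [hX]
    exact span_le.mpr fun x hx => mem_fH_gH hx.1 hx.2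

lemma rmlMeet_eq (X Y : Submodule L (Fin n → L)) :
    rmlMeet Fq 1 X Y = fH Fq L n (gH Fq L n X ⊓ gH Fq L n Y) := by
  apply le_antisymm
  · apply span_le.mpr
    rintro x ⟨hxy, hr⟩
    have h1 := mem_fH_gH (Fq := Fq) (X := X ⊓ Y) hxy hr
    refine fH_mono ?_ h1
    intro u hu
    exact ⟨hu.1, hu.2⟩
  · apply span_le.mpr
    rintro x ⟨u, hu, rfl⟩
    exact subset_span ⟨⟨hu.1, hu.2⟩, rkVec_eLmap_le_one u⟩

lemma eLmap_mem_span_image {s : Set (Fin n → Fq)} {u : Fin n → Fq} (hu : u ∈ span Fq s) :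
    eLmap Fq L n u ∈ span L (eLmap Fq L n '' s) := by
  induction hu using Submodule.span_induction with
  | mem x hx => exact subset_span (Set.mem_image_of_mem _ hx)
  | zero => rw [map_zero]; exact zero_mem _
  | add x y _ _ hx hy => rw [map_add]; exact add_mem hx hy
  | smul a x _ hx =>
      rw [map_smul]
      have : a • eLmap Fq L n x = algebraMap Fq L a • eLmap Fq L n x := by
        funext i; simp [eLmap_apply, Algebra.smul_def]
      rw [this]; exact Submodule.smul_mem _ _ hx

lemma fH_sup (U V : Submodule Fq (Fin n → Fq)) :
    fH Fq L n (U ⊔ V) = fH Fq L n U ⊔ fH Fq L n V := by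
  apply le_antisymm
  · apply span_le.mpr
    rintro x ⟨u, hu, rfl⟩
    have : u ∈ span Fq ((U : Set (Fin n → Fq)) ∪ V) := by
      rwa [span_union, span_eq, span_eq]
    have := eLmap_mem_span_image (L := L) this
    rw [Set.image_union, span_union] at this
    exact this
  · exact sup_le (fH_mono le_sup_left) (fH_mono le_sup_right)

end Aux

theorem rml_one_orderIso_subspace_lattice (q m n : ℕ) (hq : IsPrimePow q) (hn : 2 ≤ n)
    (hm : 2 ≤ m) (Fq L : Type) [Field Fq] [Field L] [Algebra Fq L] [Fintype Fq]
    (hcard : Fintype.card Fq = q) (hdim : Module.finrank Fq L = m) :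
    (∃ f : Submodule Fq (Fin n → Fq) ≃o {X : Submodule L (Fin n → L) // X ∈ RML Fq L n 1},
      ∀ U : Submodule Fq (Fin n → Fq),
        (f U : Submodule L (Fin n → L)) =
          Submodule.span L ((fun u i => algebraMap Fq L (u i)) '' (U : Set (Fin n → Fq)))) ∧
    (∀ X ∈ RML Fq L n 1, ∀ Y ∈ RML Fq L n 1, ∀ Z ∈ RML Fq L n 1, X ≤ Z →
      rmlMeet Fq 1 (X ⊔ Y) Z = X ⊔ rmlMeet Fq 1 Y Z) := by
  constructor
  · refine ⟨{ toFun := fun U => ⟨fH Fq L n U, fH_mem_RML U⟩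
              invFun := fun X => gH Fq L n X.1
              left_inv := fun U => gH_fH U
              right_inv := fun X => Subtype.ext (fH_gH X.1 X.2)
              map_rel_iff' := fun {U V} => by
                simpa [Subtype.mk_le_mk] using fH_le_iff (Fq := Fq) (L := L) (n := n) (U := U) (V := V) },
            fun U => ?_⟩
    rfl
  · intro X hX Y hY Z hZ hXZ
    have hUW : gH Fq L n X ≤ gH Fq L n Z := gH_mono hXZ
    calc rmlMeet Fq 1 (X ⊔ Y) Z
        = fH Fq L n (gH Fq L n (X ⊔ Y) ⊓ gH Fq L n Z) := rmlMeet_eq _ _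
      _ = fH Fq L n ((gH Fq L n X ⊔ gH Fq L n Y) ⊓ gH Fq L n Z) := by
          rw [show X ⊔ Y = fH Fq L n (gH Fq L n X ⊔ gH Fq L n Y) by
            rw [fH_sup, fH_gH X hX, fH_gH Y hY], gH_fH]
      _ = fH Fq L n (gH Fq L n X ⊔ (gH Fq L n Y ⊓ gH Fq L n Z)) := by
          rw [sup_inf_assoc_of_le _ hUW]
      _ = X ⊔ rmlMeet Fq 1 Y Z := by
          rw [fH_sup, fH_gH X hX, rmlMeet_eq]
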